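/- arXiv:2307.04628 — 2 statements merged into one kernel-verified Lean document; each statement's English description precedes it below -/
import Mathlib

section
/- Let k, q ∈ ℕ, let H be a k-labeled graph, and let i, b, a_1, …, a_q ∈ Fin k with b ∈ {a_1, …, a_q, i}. Assume no operator occurrence on the left-hand side is useless. Then θ_i(ρ_{a_1→i}(⋯ ρ_{a_q→i}(θ_b(H)) ⋯)) = θ_i(ρ_{a_1→i}(⋯ ρ_{a_q→i}(H) ⋯)) as k-labeled graphs, up to label-preserving isomorphism. -/
/-! ### `k`-labeled graphs and the basic operations on them -/

/-- A `k`-labeled graph: a simple graph together with a labeling of its vertices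
by labels from `Fin k`. -/
structure LGraph (k : ℕ) where
  V : Type
  G : SimpleGraph V
  lab : V → Fin k

namespace LGraph

variable {k : ℕ}

/-- The join operation `η_{a,b}`: add all edges between vertices of label `a`
and vertices of label `b`. -/
def join (a b : Fin k) (H : LGraph k) : LGraph k where
  V := H.V
  G :=
    { Adj := fun u v =>
        H.G.Adj u v ∨ (u ≠ v ∧ ((H.lab u = a ∧ H.lab v = b) ∨ (H.lab u = b ∧ H.lab v = a)))
      symm := by
        constructor
        intro u v h
        rcases h with h | ⟨hne, h⟩
        · exact Or.inl (H.G.adj_symm h)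
        · refine Or.inr ⟨hne.symm, ?_⟩
          rcases h with ⟨h1, h2⟩ | ⟨h1, h2⟩
          · exact Or.inr ⟨h2, h1⟩
          · exact Or.inl ⟨h2, h1⟩
      loopless := by
        constructor
        intro v h
        rcases h with h | ⟨hne, _⟩
        · exact H.G.loopless.irrefl v h
        · exact hne rfl }
  lab := H.lab

/-- The relabel operation `ρ_{a→b}`: every vertex of label `a` gets label `b` instead. -/
def relabel (a b : Fin k) (H : LGraph k) : LGraph k where
  V := H.V
  G := H.G
  lab := fun v => if H.lab v = a then b else H.lab v

/-- The fuse operation `θ_i`: replace all vertices of label `i` by a single new vertex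
(represented by `none`) of label `i` whose neighbourhood is the union of their
neighbourhoods. -/
def fuse (i : Fin k) (H : LGraph k) : LGraph k where
  V := Option {v : H.V // H.lab v ≠ i}
  G :=
    { Adj := fun x y =>
        match x, y with
        | some u, some v => H.G.Adj u.1 v.1
        | some u, none => ∃ w, H.lab w = i ∧ H.G.Adj u.1 w
        | none, some v => ∃ w, H.lab w = i ∧ H.G.Adj w v.1
        | none, none => False
      symm := by
        constructor
        rintro (_ | u) (_ | v) h
        · exact h
        · obtain ⟨w, hw, ha⟩ := h
          exact ⟨w, hw, ha.symm⟩
        · obtain ⟨w, hw, ha⟩ := h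
          exact ⟨w, hw, ha.symm⟩
        · exact H.G.adj_symm h
      loopless := by
        constructor
        rintro (_ | v) h
        · exact h
        · exact H.G.loopless.irrefl v.1 h }
  lab := fun x =>
    match x with
    | some u => H.lab u.1
    | none => i

/-- Disjoint union `H1 ⊕ H2` of two `k`-labeled graphs. -/
def union (H1 H2 : LGraph k) : LGraph k where
  V := H1.V ⊕ H2.V
  G := H1.G ⊕g H2.G
  lab := Sum.elim H1.lab H2.lab

/-- Label-preserving isomorphism of `k`-labeled graphs. -/
def LIso (H1 H2 : LGraph k) : Prop :=
  ∃ e : H1.G ≃g H2.G, ∀ v, H2.lab (e v) = H1.lab v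

/-- The occurrence of the join operator `η_{a,b}` applied to `H` is not useless,
i.e. it creates at least one new edge. -/
def joinUseful (a b : Fin k) (H : LGraph k) : Prop :=
  ∃ u v : H.V, u ≠ v ∧ H.lab u = a ∧ H.lab v = b ∧ ¬ H.G.Adj u v

/-- The occurrence of the fuse operator `θ_i` applied to `H` is not useless,
i.e. `H` has at least two vertices of label `i`. -/
def fuseUseful (i : Fin k) (H : LGraph k) : Prop :=
  ∃ u v : H.V, u ≠ v ∧ H.lab u = i ∧ H.lab v = i

/-- The occurrence of a relabel operator `ρ_{a→b}` applied to `H` is not useless,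
i.e. `H` has a vertex of label `a`. -/
def relabelUseful (a : Fin k) (H : LGraph k) : Prop :=
  ∃ v : H.V, H.lab v = a

/-- `relabelSeq i [a₁, …, a_q] H = ρ_{a₁→i}(⋯(ρ_{a_q→i}(H))⋯)`. -/
def relabelSeq (i : Fin k) : List (Fin k) → LGraph k → LGraph k
  | [], H => H
  | a :: as, H => relabel a i (relabelSeq i as H)

/-- None of the relabel operators in `relabelSeq i as H` is useless (this includes
that none of them has the form `ρ_{a→a}`). -/
def relabelSeqUseful (i : Fin k) : List (Fin k) → LGraph k → Prop
  | [], _ => True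
  | a :: as, H => relabelSeqUseful i as H ∧ a ≠ i ∧ relabelUseful a (relabelSeq i as H)

end LGraph

open LGraph

/-- The composite relabeling function of `relabelSeq`. -/
def labF {k : ℕ} (i : Fin k) : List (Fin k) → Fin k → Fin k
  | [], x => x
  | a :: as, x => if labF i as x = a then i else labF i as x

lemma labF_cases {k : ℕ} (i : Fin k) (as : List (Fin k)) (x : Fin k) :
    labF i as x = i ∨ labF i as x = x := by
  induction as with
  | nil => exact Or.inr rfl
  | cons a as ih =>
    unfold labF
    split
    · exact Or.inl rfl
    · exact ih

lemma labF_i {k : ℕ} (i : Fin k) (as : List (Fin k)) : labF i as i = i := by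
  induction as with
  | nil => rfl
  | cons a as ih =>
    unfold labF
    rw [ih]
    split <;> rfl

lemma labF_mem {k : ℕ} (i : Fin k) {as : List (Fin k)} {x : Fin k}
    (hx : x ∈ as) : labF i as x = i := by
  induction as with
  | nil => simp at hx
  | cons a as ih =>
    unfold labF
    rcases List.mem_cons.1 hx with rfl | hx
    · rcases labF_cases i as x with h | h
      · rw [h]; split <;> rfl
      · rw [h]; simp
    · rw [ih hx]; split <;> rfl

lemma LGraph.relabelSeq_eq {k : ℕ} (i : Fin k) (as : List (Fin k)) (H : LGraph k) :
    relabelSeq i as H = ⟨H.V, H.G, fun v => labF i as (H.lab v)⟩ := by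
  induction as with
  | nil => rfl
  | cons a as ih =>
    show relabel a i (relabelSeq i as H) = _
    rw [ih]
    rfl

/-- rule 10: if `b ∈ {a₁, …, a_q, i}`, then
`θ_i(ρ_{a₁→i}(⋯ρ_{a_q→i}(θ_b(H))⋯)) = θ_i(ρ_{a₁→i}(⋯ρ_{a_q→i}(H)⋯))`
provided that no operator occurrence on the left-hand side is useless. -/
theorem fuse_relabelSeq_fuse_absorb {k : ℕ} (H : LGraph k) (i b : Fin k)
    (as : List (Fin k)) (hb : b ∈ as ∨ b = i)
    (hinner : fuseUseful b H)
    (hseq : relabelSeqUseful i as (fuse b H))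
    (hfuse : fuseUseful i (relabelSeq i as (fuse b H))) :
    LIso (fuse i (relabelSeq i as (fuse b H)))
         (fuse i (relabelSeq i as H)) := by
  clear hinner hseq hfuse
  have hFb : labF i as b = i := by
    rcases hb with h | rfl
    · exact labF_mem i h
    · exact labF_i _ as
  rw [relabelSeq_eq, relabelSeq_eq]
  -- vertex sets
  have hvb : ∀ v : H.V, labF i as (H.lab v) ≠ i → H.lab v ≠ b := by
    intro v hv hvb
    exact hv (hvb ▸ hFb)
  refine ⟨⟨⟨?_, ?_, ?_, ?_⟩, ?_⟩, ?_⟩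
  · -- toFun
    exact fun x => match x with
      | none => none
      | some ⟨some u, h⟩ => some ⟨u.1, h⟩
      | some ⟨none, h⟩ => absurd hFb h
  · -- invFun
    exact fun y => match y with
      | none => none
      | some ⟨v, h⟩ => some ⟨some ⟨v, hvb v h⟩, h⟩
  · -- left_inv
    rintro (_ | ⟨(_ | u), h⟩)
    · rfl
    · exact absurd hFb h
    · rfl
  · -- right_inv
    rintro (_ | ⟨v, h⟩) <;> rfl
  · -- map_rel_iff
    rintro (_ | ⟨(_ | u), hu⟩) (_ | ⟨(_ | v), hv⟩)
    · exact Iff.rfl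
    · exact absurd hFb hv
    · -- none vs some (some v)
      constructor
      · rintro ⟨w, hw, ha⟩
        by_cases hwb : H.lab w = b
        · exact ⟨none, hFb, ⟨w, hwb, ha⟩⟩
        · exact ⟨some ⟨w, hwb⟩, hw, ha⟩
      · rintro ⟨(_ | w), hw, ha⟩
        · obtain ⟨w, hwb, ha⟩ := ha
          exact ⟨w, by show labF i as (H.lab w) = i; rw [hwb]; exact hFb, ha⟩
        · exact ⟨w.1, hw, ha⟩
    · exact absurd hFb hu
    · exact absurd hFb hu
    · exact absurd hFb hu
    · -- some (some u) vs none
      constructor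
      · rintro ⟨w, hw, ha⟩
        by_cases hwb : H.lab w = b
        · exact ⟨none, hFb, ⟨w, hwb, ha⟩⟩
        · exact ⟨some ⟨w, hwb⟩, hw, ha⟩
      · rintro ⟨(_ | w), hw, ha⟩
        · obtain ⟨w, hwb, ha⟩ := ha
          exact ⟨w, by show labF i as (H.lab w) = i; rw [hwb]; exact hFb, ha⟩
        · exact ⟨w.1, hw, ha⟩
    · exact absurd hFb hv
    · exact Iff.rfl
  · -- labels
    rintro (_ | ⟨(_ | u), h⟩)
    · rfl
    · exact absurd hFb h
    · rfl
end

section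
/- For every fuse-k-expression φ there exists a fuse-k-expression φ' whose value is the same k-labeled graph (up to label-preserving isomorphism), which contains no useless operator occurrences, and such that every fuse subterm θ_i(ψ) of φ' has its argument of the form ψ = θ_{j_1}(θ_{j_2}(⋯ θ_{j_r}(ψ_1 ⊕ ψ_2) ⋯)) for some r ≥ 0 and labels j_1, …, j_r; that is, every inner node on the path from a fuse node to the topmost union node below it is itself a fuse node. -/
/-! ### Fuse-`k`-expressions -/

/-- A fuse-`k`-expression: introduce a vertex, disjoint union, join, relabel, fuse. -/
inductive FuseExpr (k : ℕ) where
  | intro (i : Fin k)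
  | union (φ1 φ2 : FuseExpr k)
  | join (i j : Fin k) (φ : FuseExpr k)
  | relabel (i j : Fin k) (φ : FuseExpr k)
  | fuse (i : Fin k) (φ : FuseExpr k)

namespace FuseExpr

variable {k : ℕ}

/-- The single-vertex `k`-labeled graph with label `i`. -/
def singleVertex (i : Fin k) : LGraph k := ⟨PUnit, ⊥, fun _ => i⟩

/-- The `k`-labeled graph `G^φ` obtained by evaluating a fuse-`k`-expression. -/
def eval : FuseExpr k → LGraph k
  | .intro i => singleVertex i
  | .union φ1 φ2 => LGraph.union φ1.eval φ2.eval
  | .join i j φ => LGraph.join i j φ.eval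
  | .relabel i j φ => LGraph.relabel i j φ.eval
  | .fuse i φ => LGraph.fuse i φ.eval

/-- Well-formedness of a fuse-`k`-expression: joins and relabels use two distinct labels,
and every fuse `θ_i` is applied to a graph having a vertex of label `i`. -/
def WF : FuseExpr k → Prop
  | .intro _ => True
  | .union φ1 φ2 => φ1.WF ∧ φ2.WF
  | .join i j φ => i ≠ j ∧ φ.WF
  | .relabel i j φ => i ≠ j ∧ φ.WF
  | .fuse i φ => φ.WF ∧ ∃ v, φ.eval.lab v = i

end FuseExpr

/-- A graph `G` admits a fuse-`k`-expression if some well-formed fuse-`k`-expression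
evaluates to a labeled graph whose underlying simple graph is isomorphic to `G`. -/
def FuseAdmits {V : Type} (k : ℕ) (G : SimpleGraph V) : Prop :=
  ∃ φ : FuseExpr k, φ.WF ∧ Nonempty (φ.eval.G ≃g G)

namespace FuseExpr

variable {k : ℕ}

/-- No operator occurrence in the fuse-`k`-expression is useless: every join creates a
new edge, every fuse fuses at least two vertices, every relabel `ρ_{i→j}` has `i ≠ j`
and is applied to a graph with a vertex of label `i`. -/
def NoUseless : FuseExpr k → Prop
  | .intro _ => True
  | .union φ1 φ2 => φ1.NoUseless ∧ φ2.NoUseless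
  | .join i j φ => i ≠ j ∧ LGraph.joinUseful i j φ.eval ∧ φ.NoUseless
  | .relabel i j φ => i ≠ j ∧ LGraph.relabelUseful i φ.eval ∧ φ.NoUseless
  | .fuse i φ => LGraph.fuseUseful i φ.eval ∧ φ.NoUseless

/-- The expression is a chain of fuse operators `θ_{j₁}(θ_{j₂}(⋯θ_{j_r}(ψ₁ ⊕ ψ₂)⋯))`
(with `r ≥ 0`) ending in a union node. -/
def IsFuseChainToUnion : FuseExpr k → Prop
  | .union _ _ => True
  | .fuse _ ψ => ψ.IsFuseChainToUnion
  | _ => False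

/-- Every fuse subterm `θ_i(ψ)` has its argument `ψ` of the form
`θ_{j₁}(⋯θ_{j_r}(ψ₁ ⊕ ψ₂)⋯)`, i.e. every inner node on the path from a fuse node to
the topmost union node below it is itself a fuse node. -/
def FusesAboveUnions : FuseExpr k → Prop
  | .intro _ => True
  | .union φ1 φ2 => φ1.FusesAboveUnions ∧ φ2.FusesAboveUnions
  | .join _ _ φ => φ.FusesAboveUnions
  | .relabel _ _ φ => φ.FusesAboveUnions
  | .fuse _ φ => φ.IsFuseChainToUnion ∧ φ.FusesAboveUnions

end FuseExpr

/-- The `k`-labeled graph `H` has exactly one vertex of label `i`. -/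
def ExactlyOne {k : ℕ} (H : LGraph k) (i : Fin k) : Prop :=
  ∃! v : H.V, H.lab v = i

/-- The `k`-labeled graph `H` has exactly two vertices of label `i`. -/
def ExactlyTwo {k : ℕ} (H : LGraph k) (i : Fin k) : Prop :=
  ∃ u v : H.V, u ≠ v ∧ H.lab u = i ∧ H.lab v = i ∧
    ∀ w : H.V, H.lab w = i → w = u ∨ w = v

namespace FuseExpr

variable {k : ℕ}

/-- The expression is a chain of fuses ending in a union `ψ₁ ⊕ ψ₂` such that each of
`G^{ψ₁}` and `G^{ψ₂}` contains exactly one vertex of label `i` (so the two vertices of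
label `i` above the union come one from each side). -/
def ChainWithOneFromEachSide (i : Fin k) : FuseExpr k → Prop
  | .union ψ1 ψ2 => ExactlyOne ψ1.eval i ∧ ExactlyOne ψ2.eval i
  | .fuse _ ψ => ChainWithOneFromEachSide i ψ
  | _ => False

/-- Every fuse subterm `θ_i(ψ)` of the expression satisfies: `ψ` is a chain of fuses
over a union, `G^ψ` contains exactly two vertices of label `i`, and of these two
vertices one comes from each side of the union. -/
def FusesExactlyTwoFromDifferentSides : FuseExpr k → Prop
  | .intro _ => True
  | .union φ1 φ2 => φ1.FusesExactlyTwoFromDifferentSides ∧ φ2.FusesExactlyTwoFromDifferentSides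
  | .join _ _ φ => φ.FusesExactlyTwoFromDifferentSides
  | .relabel _ _ φ => φ.FusesExactlyTwoFromDifferentSides
  | .fuse i φ => ExactlyTwo φ.eval i ∧ φ.ChainWithOneFromEachSide i ∧
      φ.FusesExactlyTwoFromDifferentSides

end FuseExpr

/-! ### Auxiliary development -/

namespace LGraph

variable {k : ℕ}

lemma liso_mk {H1 H2 : LGraph k} (e : H1.V ≃ H2.V)
    (hadj : ∀ u v, H2.G.Adj (e u) (e v) ↔ H1.G.Adj u v)
    (hlab : ∀ v, H2.lab (e v) = H1.lab v) : LIso H1 H2 :=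
  ⟨⟨e, hadj _ _⟩, hlab⟩

lemma liso_refl (H : LGraph k) : LIso H H :=
  ⟨⟨Equiv.refl _, Iff.rfl⟩, fun _ => rfl⟩

lemma liso_symm {H1 H2 : LGraph k} (h : LIso H1 H2) : LIso H2 H1 := by
  obtain ⟨e, he⟩ := h
  refine ⟨e.symm, fun v => ?_⟩
  have := he (e.symm v)
  rw [RelIso.apply_symm_apply] at this
  exact this.symm

lemma liso_trans {H1 H2 H3 : LGraph k} (h : LIso H1 H2) (h' : LIso H2 H3) : LIso H1 H3 := by
  obtain ⟨e, he⟩ := h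
  obtain ⟨f, hf⟩ := h'
  exact ⟨e.trans f, fun v => (hf (e v)).trans (he v)⟩

/-- Fuse all vertices whose label lies in `S` into one new vertex of label `t`. -/
def mergeInto (S : Finset (Fin k)) (t : Fin k) (H : LGraph k) : LGraph k where
  V := Option {v : H.V // H.lab v ∉ S}
  G :=
    { Adj := fun x y =>
        match x, y with
        | some u, some v => H.G.Adj u.1 v.1
        | some u, none => ∃ w, H.lab w ∈ S ∧ H.G.Adj u.1 w
        | none, some v => ∃ w, H.lab w ∈ S ∧ H.G.Adj w v.1
        | none, none => False
      symm := by
        constructor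
        rintro (_ | u) (_ | v) h
        · exact h
        · obtain ⟨w, hw, ha⟩ := h
          exact ⟨w, hw, ha.symm⟩
        · obtain ⟨w, hw, ha⟩ := h
          exact ⟨w, hw, ha.symm⟩
        · exact H.G.adj_symm h
      loopless := by
        constructor
        rintro (_ | v) h
        · exact h
        · exact H.G.loopless.irrefl v.1 h }
  lab := fun x =>
    match x with
    | some u => H.lab u.1
    | none => t

/-- Relabel every vertex whose label lies in `S` to `t`. -/
def relabelSet (S : Finset (Fin k)) (t : Fin k) (H : LGraph k) : LGraph k where
  V := H.V
  G := H.G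
  lab := fun v => if H.lab v ∈ S then t else H.lab v

end LGraph

namespace LGraph

variable {k : ℕ}

lemma union_congr {H1 H1' H2 H2' : LGraph k} (h1 : LIso H1 H1') (h2 : LIso H2 H2') :
    LIso (union H1 H2) (union H1' H2') := by
  obtain ⟨e1, he1⟩ := h1
  obtain ⟨e2, he2⟩ := h2
  refine liso_mk (Equiv.sumCongr e1.toEquiv e2.toEquiv) ?_ ?_
  · rintro (u|u) (v|v)
    · exact e1.map_rel_iff
    · exact Iff.rfl
    · exact Iff.rfl
    · exact e2.map_rel_iff
  · rintro (v|v)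
    · exact he1 v
    · exact he2 v

lemma join_congr (a b : Fin k) {H H' : LGraph k} (h : LIso H H') :
    LIso (join a b H) (join a b H') := by
  obtain ⟨e, he⟩ := h
  refine liso_mk e.toEquiv ?_ ?_
  · intro u v
    have hm : H'.G.Adj (e.toEquiv u) (e.toEquiv v) ↔ H.G.Adj u v := e.map_rel_iff
    have hl : ∀ x : (join a b H).V, H'.lab (e.toEquiv x) = H.lab x := he
    have hi : e.toEquiv u = e.toEquiv v ↔ u = v := e.toEquiv.apply_eq_iff_eq
    show H'.G.Adj (e.toEquiv u) (e.toEquiv v) ∨ (e.toEquiv u ≠ e.toEquiv v ∧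
        ((H'.lab (e.toEquiv u) = a ∧ H'.lab (e.toEquiv v) = b) ∨
          (H'.lab (e.toEquiv u) = b ∧ H'.lab (e.toEquiv v) = a)))
      ↔ H.G.Adj u v ∨ (u ≠ v ∧ ((H.lab u = a ∧ H.lab v = b) ∨ (H.lab u = b ∧ H.lab v = a)))
    simp only [ne_eq, hm, hl, Equiv.apply_eq_iff_eq, hi]
  · intro v
    exact he v

lemma relabel_congr (a b : Fin k) {H H' : LGraph k} (h : LIso H H') :
    LIso (relabel a b H) (relabel a b H') := by
  obtain ⟨e, he⟩ := h
  refine liso_mk e.toEquiv (fun u v => e.map_rel_iff) ?_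
  intro v
  show (if H'.lab (e v) = a then b else H'.lab (e v)) = (if H.lab v = a then b else H.lab v)
  exact congrArg (fun x => if x = a then b else x) (he v)

lemma mergeInto_congr (S : Finset (Fin k)) (t : Fin k) {H H' : LGraph k} (h : LIso H H') :
    LIso (mergeInto S t H) (mergeInto S t H') := by
  obtain ⟨e, he⟩ := h
  refine liso_mk (Equiv.optionCongr (e.toEquiv.subtypeEquiv (fun v => by rw [show e.toEquiv v = e v from rfl, he]))) ?_ ?_
  · rintro (_|u) (_|v)
    · exact Iff.rfl
    · show (∃ w, H'.lab w ∈ S ∧ H'.G.Adj w (e v.1)) ↔ (∃ w, H.lab w ∈ S ∧ H.G.Adj w v.1)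
      constructor
      · rintro ⟨w, hw, ha⟩
        refine ⟨e.symm w, ?_, ?_⟩
        · have := he (e.symm w); rw [RelIso.apply_symm_apply] at this; rwa [← this]
        · have : H'.G.Adj (e (e.symm w)) (e v.1) ↔ H.G.Adj (e.symm w) v.1 := e.map_rel_iff
          rw [RelIso.apply_symm_apply] at this
          exact this.mp ha
      · rintro ⟨w, hw, ha⟩
        exact ⟨e w, by rw [he]; exact hw, e.map_rel_iff.mpr ha⟩
    · show (∃ w, H'.lab w ∈ S ∧ H'.G.Adj (e u.1) w) ↔ (∃ w, H.lab w ∈ S ∧ H.G.Adj u.1 w)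
      constructor
      · rintro ⟨w, hw, ha⟩
        refine ⟨e.symm w, ?_, ?_⟩
        · have := he (e.symm w); rw [RelIso.apply_symm_apply] at this; rwa [← this]
        · have : H'.G.Adj (e u.1) (e (e.symm w)) ↔ H.G.Adj u.1 (e.symm w) := e.map_rel_iff
          rw [RelIso.apply_symm_apply] at this
          exact this.mp ha
      · rintro ⟨w, hw, ha⟩
        exact ⟨e w, by rw [he]; exact hw, e.map_rel_iff.mpr ha⟩
    · exact e.map_rel_iff
  · rintro (_|v)
    · rfl
    · exact he v.1

lemma fuse_liso_mergeInto (i : Fin k) (H : LGraph k) :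
    LIso (fuse i H) (mergeInto {i} i H) := by
  refine liso_mk (Equiv.optionCongr ((Equiv.refl H.V).subtypeEquiv
      (fun v => by simp [Finset.mem_singleton]))) ?_ ?_
  · rintro (_|u) (_|v)
    · exact Iff.rfl
    · show (∃ w, H.lab w ∈ ({i} : Finset (Fin k)) ∧ H.G.Adj w v.1) ↔
        (∃ w, H.lab w = i ∧ H.G.Adj w v.1)
      simp [Finset.mem_singleton]
    · show (∃ w, H.lab w ∈ ({i} : Finset (Fin k)) ∧ H.G.Adj u.1 w) ↔
        (∃ w, H.lab w = i ∧ H.G.Adj u.1 w)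
      simp [Finset.mem_singleton]
    · exact Iff.rfl
  · rintro (_|v) <;> rfl

end LGraph

namespace LGraph

variable {k : ℕ}

@[simp] lemma mergeInto_adj_some_some {S : Finset (Fin k)} {t : Fin k} {H : LGraph k}
    {u v : {v : H.V // H.lab v ∉ S}} :
    (mergeInto S t H).G.Adj (some u) (some v) ↔ H.G.Adj u.1 v.1 := Iff.rfl

@[simp] lemma mergeInto_adj_some_none {S : Finset (Fin k)} {t : Fin k} {H : LGraph k}
    {u : {v : H.V // H.lab v ∉ S}} :
    (mergeInto S t H).G.Adj (some u) none ↔ ∃ w, H.lab w ∈ S ∧ H.G.Adj u.1 w := Iff.rfl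

@[simp] lemma mergeInto_adj_none_some {S : Finset (Fin k)} {t : Fin k} {H : LGraph k}
    {v : {v : H.V // H.lab v ∉ S}} :
    (mergeInto S t H).G.Adj none (some v) ↔ ∃ w, H.lab w ∈ S ∧ H.G.Adj w v.1 := Iff.rfl

@[simp] lemma mergeInto_adj_none_none {S : Finset (Fin k)} {t : Fin k} {H : LGraph k} :
    (mergeInto S t H).G.Adj none none ↔ False := Iff.rfl

@[simp] lemma mergeInto_lab_some {S : Finset (Fin k)} {t : Fin k} {H : LGraph k}
    {u : {v : H.V // H.lab v ∉ S}} : (mergeInto S t H).lab (some u) = H.lab u.1 := rfl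

@[simp] lemma mergeInto_lab_none {S : Finset (Fin k)} {t : Fin k} {H : LGraph k} :
    (mergeInto S t H).lab none = t := rfl

@[simp] lemma fuse_adj_some_some {i : Fin k} {H : LGraph k}
    {u v : {v : H.V // H.lab v ≠ i}} :
    (fuse i H).G.Adj (some u) (some v) ↔ H.G.Adj u.1 v.1 := Iff.rfl

@[simp] lemma fuse_adj_some_none {i : Fin k} {H : LGraph k}
    {u : {v : H.V // H.lab v ≠ i}} :
    (fuse i H).G.Adj (some u) none ↔ ∃ w, H.lab w = i ∧ H.G.Adj u.1 w := Iff.rfl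

@[simp] lemma fuse_adj_none_some {i : Fin k} {H : LGraph k}
    {v : {v : H.V // H.lab v ≠ i}} :
    (fuse i H).G.Adj none (some v) ↔ ∃ w, H.lab w = i ∧ H.G.Adj w v.1 := Iff.rfl

@[simp] lemma fuse_adj_none_none {i : Fin k} {H : LGraph k} :
    (fuse i H).G.Adj none none ↔ False := Iff.rfl

@[simp] lemma fuse_lab_some {i : Fin k} {H : LGraph k}
    {u : {v : H.V // H.lab v ≠ i}} : (fuse i H).lab (some u) = H.lab u.1 := rfl

@[simp] lemma fuse_lab_none {i : Fin k} {H : LGraph k} : (fuse i H).lab none = i := rfl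

@[simp] lemma join_adj {a b : Fin k} {H : LGraph k} {u v : H.V} :
    (join a b H).G.Adj u v ↔ H.G.Adj u v ∨
      (u ≠ v ∧ ((H.lab u = a ∧ H.lab v = b) ∨ (H.lab u = b ∧ H.lab v = a))) := Iff.rfl

@[simp] lemma join_lab {a b : Fin k} {H : LGraph k} {v : H.V} :
    (join a b H).lab v = H.lab v := rfl

@[simp] lemma relabel_adj {a b : Fin k} {H : LGraph k} {u v : H.V} :
    (relabel a b H).G.Adj u v ↔ H.G.Adj u v := Iff.rfl

@[simp] lemma relabel_lab {a b : Fin k} {H : LGraph k} {v : H.V} :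
    (relabel a b H).lab v = if H.lab v = a then b else H.lab v := rfl

@[simp] lemma relabelSet_adj {S : Finset (Fin k)} {t : Fin k} {H : LGraph k} {u v : H.V} :
    (relabelSet S t H).G.Adj u v ↔ H.G.Adj u v := Iff.rfl

@[simp] lemma relabelSet_lab {S : Finset (Fin k)} {t : Fin k} {H : LGraph k} {v : H.V} :
    (relabelSet S t H).lab v = if H.lab v ∈ S then t else H.lab v := rfl

@[simp] lemma union_lab_inl {H1 H2 : LGraph k} {v : H1.V} :
    (union H1 H2).lab (Sum.inl v) = H1.lab v := rfl

@[simp] lemma union_lab_inr {H1 H2 : LGraph k} {v : H2.V} :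
    (union H1 H2).lab (Sum.inr v) = H2.lab v := rfl

lemma union_adj {H1 H2 : LGraph k} {u v : (H1.V ⊕ H2.V)} :
    (union H1 H2).G.Adj u v ↔ (H1.G ⊕g H2.G).Adj u v := Iff.rfl

end LGraph

namespace LGraph

variable {k : ℕ}

lemma relabelSet_erase_liso (S : Finset (Fin k)) (t : Fin k) (H : LGraph k) :
    LIso (relabelSet (S.erase t) t H) (relabelSet S t H) := by
  refine liso_mk (Equiv.refl _) (fun _ _ => Iff.rfl) (fun v => ?_)
  show (if H.lab v ∈ S then t else H.lab v) = (if H.lab v ∈ S.erase t then t else H.lab v)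
  rcases eq_or_ne (H.lab v) t with h | h
  · simp [Finset.mem_erase, h]
  · simp [Finset.mem_erase, h]

lemma relabelSet_union_liso (S : Finset (Fin k)) (t : Fin k) (H1 H2 : LGraph k) :
    LIso (relabelSet S t (union H1 H2)) (union (relabelSet S t H1) (relabelSet S t H2)) := by
  refine liso_mk (Equiv.refl _) (fun _ _ => Iff.rfl) ?_
  rintro (v | v) <;> rfl

lemma merge_relabelSet {S : Finset (Fin k)} {t : Fin k} (ht : t ∈ S) (H : LGraph k) :
    LIso (mergeInto S t H) (fuse t (relabelSet S t H)) := by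
  have hpred : ∀ v : H.V, H.lab v ∉ S ↔ (relabelSet S t H).lab v ≠ t := by
    intro v
    simp only [relabelSet_lab]
    constructor
    · intro h
      rw [if_neg h]
      exact fun he => h (he ▸ ht)
    · intro h hin
      exact h (by simp [hin])
  refine liso_mk (Equiv.optionCongr ((Equiv.refl H.V).subtypeEquiv hpred)) ?_ ?_
  · rintro (_ | u) (_ | v)
    · exact Iff.rfl
    · show (∃ w, (relabelSet S t H).lab w = t ∧ H.G.Adj w v.1) ↔
        (∃ w, H.lab w ∈ S ∧ H.G.Adj w v.1)
      constructor
      · rintro ⟨w, h1, h2⟩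
        refine ⟨w, ?_, h2⟩
        change (if H.lab w ∈ S then t else H.lab w) = t at h1
        by_cases hw : H.lab w ∈ S
        · exact hw
        · rw [if_neg hw] at h1; exact h1 ▸ ht
      · rintro ⟨w, h1, h2⟩
        exact ⟨w, by simp [h1], h2⟩
    · show (∃ w, (relabelSet S t H).lab w = t ∧ H.G.Adj u.1 w) ↔
        (∃ w, H.lab w ∈ S ∧ H.G.Adj u.1 w)
      constructor
      · rintro ⟨w, h1, h2⟩
        refine ⟨w, ?_, h2⟩
        change (if H.lab w ∈ S then t else H.lab w) = t at h1
        by_cases hw : H.lab w ∈ S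
        · exact hw
        · rw [if_neg hw] at h1; exact h1 ▸ ht
      · rintro ⟨w, h1, h2⟩
        exact ⟨w, by simp [h1], h2⟩
    · exact Iff.rfl
  · rintro (_ | u)
    · rfl
    · show (if H.lab u.1 ∈ S then t else H.lab u.1) = H.lab u.1
      exact if_neg u.2

lemma merge_single {S : Finset (Fin k)} {t : Fin k} {H : LGraph k} (ht : t ∈ S)
    (v : H.V) (hv : H.lab v ∈ S) (huniq : ∀ w, H.lab w ∈ S → w = v) :
    LIso (mergeInto S t H) (relabel (H.lab v) t H) := by
  refine liso_mk ⟨fun x => Option.elim x v Subtype.val,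
      fun w => if h : H.lab w ∈ S then none else some ⟨w, h⟩, ?_, ?_⟩ ?_ ?_
  · rintro (_ | u)
    · exact dif_pos hv
    · exact dif_neg u.2
  · intro w
    by_cases h : H.lab w ∈ S
    · dsimp only
      exact (congrArg (fun o : Option {x : H.V // H.lab x ∉ S} => Option.elim o v Subtype.val)
        (dif_pos h)).trans (huniq w h).symm
    · dsimp only
      exact congrArg (fun o : Option {x : H.V // H.lab x ∉ S} => Option.elim o v Subtype.val)
        (dif_neg h)
  · rintro (_ | u) (_ | w)
    · show H.G.Adj v v ↔ False
      simp
    · show H.G.Adj v w.1 ↔ ∃ z, H.lab z ∈ S ∧ H.G.Adj z w.1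
      constructor
      · intro h; exact ⟨v, hv, h⟩
      · rintro ⟨z, hz, ha⟩; rwa [huniq z hz] at ha
    · show H.G.Adj u.1 v ↔ ∃ z, H.lab z ∈ S ∧ H.G.Adj u.1 z
      constructor
      · intro h; exact ⟨v, hv, h⟩
      · rintro ⟨z, hz, ha⟩; rwa [huniq z hz] at ha
    · exact Iff.rfl
  · rintro (_ | u)
    · show (if H.lab v = H.lab v then t else H.lab v) = t
      simp
    · show (if H.lab u.1 = H.lab v then t else H.lab u.1) = H.lab u.1
      exact if_neg (fun h : H.lab u.1 = H.lab v => u.2 (h ▸ hv))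

lemma relabel_self_liso (a : Fin k) (H : LGraph k) : LIso (relabel a a H) H := by
  refine liso_mk (Equiv.refl _) (fun _ _ => Iff.rfl) (fun v => ?_)
  show H.lab v = if H.lab v = a then a else H.lab v
  split_ifs with h
  · exact h
  · rfl

lemma relabel_useless_liso {a : Fin k} (b : Fin k) {H : LGraph k}
    (h : ¬ relabelUseful a H) : LIso (relabel a b H) H := by
  refine liso_mk (Equiv.refl _) (fun _ _ => Iff.rfl) (fun v => ?_)
  show H.lab v = if H.lab v = a then b else H.lab v
  rw [if_neg (fun hv => h ⟨v, hv⟩)]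

lemma join_useless_liso {a b : Fin k} {H : LGraph k}
    (h : ¬ joinUseful a b H) : LIso (join a b H) H := by
  refine liso_mk (Equiv.refl _) (fun u v => ?_) (fun v => rfl)
  show H.G.Adj u v ↔ (join a b H).G.Adj u v
  refine Iff.trans ?_ join_adj.symm
  constructor
  · exact Or.inl
  · rintro (hadj | ⟨hne, ⟨h1, h2⟩ | ⟨h1, h2⟩⟩)
    · exact hadj
    · by_contra hna
      exact h ⟨u, v, hne, h1, h2, hna⟩
    · by_contra hna
      exact h ⟨v, u, hne.symm, h2, h1, fun hs => hna hs.symm⟩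

lemma fuse_single_liso {i : Fin k} {H : LGraph k} (v : H.V) (hv : H.lab v = i)
    (huniq : ∀ w, H.lab w = i → w = v) : LIso (fuse i H) H := by
  refine liso_trans (fuse_liso_mergeInto i H) (liso_trans
    (merge_single (Finset.mem_singleton_self i) v (by simp [hv])
      (fun w hw => huniq w (Finset.mem_singleton.mp hw))) ?_)
  rw [hv]
  exact relabel_self_liso i H

end LGraph

namespace LGraph

variable {k : ℕ}

lemma merge_fuse_mem {S : Finset (Fin k)} {t j : Fin k} (hj : j ∈ S) (H : LGraph k) :
    LIso (mergeInto S t (fuse j H)) (mergeInto S t H) := by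
  refine liso_mk ⟨fun x => match x with
      | none => none
      | some ⟨some u, h⟩ => some ⟨u.1, h⟩
      | some ⟨none, h⟩ => absurd hj h,
    fun y => match y with
      | none => none
      | some ⟨v, h⟩ => some ⟨some ⟨v, fun hl => h (by rw [hl]; exact hj)⟩, h⟩, ?_, ?_⟩ ?_ ?_
  · rintro (_ | ⟨(_ | u), h⟩)
    · rfl
    · exact absurd hj h
    · rfl
  · rintro (_ | ⟨v, h⟩) <;> rfl
  · rintro (_ | ⟨(_ | u), hu⟩) (_ | ⟨(_ | v), hv⟩)
    · exact Iff.rfl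
    · exact absurd hj hv
    · show (∃ w, H.lab w ∈ S ∧ H.G.Adj w v.1) ↔
        (∃ w : Option {x : H.V // H.lab x ≠ j}, (fuse j H).lab w ∈ S ∧ (fuse j H).G.Adj w (some v))
      constructor
      · rintro ⟨w, hw, ha⟩
        by_cases hwj : H.lab w = j
        · exact ⟨none, hj, ⟨w, hwj, ha⟩⟩
        · exact ⟨some ⟨w, hwj⟩, hw, ha⟩
      · rintro ⟨(_ | w'), hw, ha⟩
        · obtain ⟨z, hz, haz⟩ := ha
          exact ⟨z, by rw [hz]; exact hj, haz⟩
        · exact ⟨w'.1, hw, ha⟩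
    · exact absurd hj hu
    · exact absurd hj hu
    · exact absurd hj hu
    · show (∃ w, H.lab w ∈ S ∧ H.G.Adj u.1 w) ↔
        (∃ w : Option {x : H.V // H.lab x ≠ j}, (fuse j H).lab w ∈ S ∧ (fuse j H).G.Adj (some u) w)
      constructor
      · rintro ⟨w, hw, ha⟩
        by_cases hwj : H.lab w = j
        · exact ⟨none, hj, ⟨w, hwj, ha⟩⟩
        · exact ⟨some ⟨w, hwj⟩, hw, ha⟩
      · rintro ⟨(_ | w'), hw, ha⟩
        · obtain ⟨z, hz, haz⟩ := ha
          exact ⟨z, by rw [hz]; exact hj, haz⟩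
        · exact ⟨w'.1, hw, ha⟩
    · exact absurd hj hv
    · exact Iff.rfl
  · rintro (_ | ⟨(_ | u), h⟩)
    · rfl
    · exact absurd hj h
    · rfl

lemma merge_fuse_notmem {S : Finset (Fin k)} {t j : Fin k} (hj : j ∉ S) (htj : t ≠ j)
    (H : LGraph k) :
    LIso (mergeInto S t (fuse j H)) (fuse j (mergeInto S t H)) := by
  refine liso_mk ⟨fun x => match x with
      | none => some ⟨none, htj⟩
      | some ⟨none, _⟩ => none
      | some ⟨some u, h⟩ => some ⟨some ⟨u.1, h⟩, u.2⟩,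
    fun y => match y with
      | none => some ⟨none, hj⟩
      | some ⟨none, _⟩ => none
      | some ⟨some v, h⟩ => some ⟨some ⟨v.1, h⟩, v.2⟩, ?_, ?_⟩ ?_ ?_
  · rintro (_ | ⟨(_ | u), h⟩) <;> rfl
  · rintro (_ | ⟨(_ | v), h⟩) <;> rfl
  · rintro (_ | ⟨(_ | u), hu⟩) (_ | ⟨(_ | v), hv⟩)
    -- (none, none)
    · exact Iff.rfl
    -- (none, some ⟨none⟩)
    · show (∃ w : Option {x : H.V // H.lab x ∉ S}, (mergeInto S t H).lab w = j ∧
          (mergeInto S t H).G.Adj none w) ↔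
        (∃ w : Option {x : H.V // H.lab x ≠ j}, (fuse j H).lab w ∈ S ∧ (fuse j H).G.Adj w none)
      constructor
      · rintro ⟨(_ | w), hl, ha⟩
        · exact absurd hl htj
        · obtain ⟨z, hz, haz⟩ := ha
          exact ⟨some ⟨z, fun h => hj (h ▸ hz)⟩, hz, ⟨w.1, hl, haz⟩⟩
      · rintro ⟨(_ | w), hl, ha⟩
        · exact absurd hl hj
        · obtain ⟨z, hzj, haz⟩ := ha
          exact ⟨some ⟨z, fun hzs => hj (hzj ▸ hzs)⟩, hzj, ⟨w.1, hl, haz⟩⟩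
    -- (none, some ⟨some v⟩)
    · show (∃ z, H.lab z ∈ S ∧ H.G.Adj z v.1) ↔
        (∃ w : Option {x : H.V // H.lab x ≠ j}, (fuse j H).lab w ∈ S ∧ (fuse j H).G.Adj w (some v))
      constructor
      · rintro ⟨z, hz, haz⟩
        exact ⟨some ⟨z, fun h => hj (h ▸ hz)⟩, hz, haz⟩
      · rintro ⟨(_ | w), hl, ha⟩
        · exact absurd hl hj
        · exact ⟨w.1, hl, ha⟩
    -- (some ⟨none⟩, none)
    · show (∃ w : Option {x : H.V // H.lab x ∉ S}, (mergeInto S t H).lab w = j ∧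
          (mergeInto S t H).G.Adj w none) ↔
        (∃ w : Option {x : H.V // H.lab x ≠ j}, (fuse j H).lab w ∈ S ∧ (fuse j H).G.Adj none w)
      constructor
      · rintro ⟨(_ | w), hl, ha⟩
        · exact absurd hl htj
        · obtain ⟨z, hz, haz⟩ := ha
          exact ⟨some ⟨z, fun h => hj (h ▸ hz)⟩, hz, ⟨w.1, hl, haz⟩⟩
      · rintro ⟨(_ | w), hl, ha⟩
        · exact absurd hl hj
        · obtain ⟨z, hzj, haz⟩ := ha
          exact ⟨some ⟨z, fun hzs => hj (hzj ▸ hzs)⟩, hzj, ⟨w.1, hl, haz⟩⟩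
    -- (some ⟨none⟩, some ⟨none⟩)
    · exact Iff.rfl
    -- (some ⟨none⟩, some ⟨some v⟩)
    · show (∃ w : Option {x : H.V // H.lab x ∉ S}, (mergeInto S t H).lab w = j ∧
          (mergeInto S t H).G.Adj w (some ⟨v.1, hv⟩)) ↔
        (∃ z, H.lab z = j ∧ H.G.Adj z v.1)
      constructor
      · rintro ⟨(_ | w), hl, ha⟩
        · exact absurd hl htj
        · exact ⟨w.1, hl, ha⟩
      · rintro ⟨z, hzj, haz⟩
        exact ⟨some ⟨z, fun hzs => hj (hzj ▸ hzs)⟩, hzj, haz⟩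
    -- (some ⟨some u⟩, none)
    · show (∃ z, H.lab z ∈ S ∧ H.G.Adj u.1 z) ↔
        (∃ w : Option {x : H.V // H.lab x ≠ j}, (fuse j H).lab w ∈ S ∧ (fuse j H).G.Adj (some u) w)
      constructor
      · rintro ⟨z, hz, haz⟩
        exact ⟨some ⟨z, fun h => hj (h ▸ hz)⟩, hz, haz⟩
      · rintro ⟨(_ | w), hl, ha⟩
        · exact absurd hl hj
        · exact ⟨w.1, hl, ha⟩
    -- (some ⟨some u⟩, some ⟨none⟩)
    · show (∃ w : Option {x : H.V // H.lab x ∉ S}, (mergeInto S t H).lab w = j ∧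
          (mergeInto S t H).G.Adj (some ⟨u.1, hu⟩) w) ↔
        (∃ z, H.lab z = j ∧ H.G.Adj u.1 z)
      constructor
      · rintro ⟨(_ | w), hl, ha⟩
        · exact absurd hl htj
        · exact ⟨w.1, hl, ha⟩
      · rintro ⟨z, hzj, haz⟩
        exact ⟨some ⟨z, fun hzs => hj (hzj ▸ hzs)⟩, hzj, haz⟩
    -- (some ⟨some u⟩, some ⟨some v⟩)
    · exact Iff.rfl
  · rintro (_ | ⟨(_ | u), h⟩) <;> rfl

end LGraph

namespace LGraph

variable {k : ℕ}

lemma join_comm_liso (a b : Fin k) (H : LGraph k) : LIso (join a b H) (join b a H) := by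
  refine liso_mk (Equiv.refl _) (fun u v => ?_) (fun v => rfl)
  show (H.G.Adj u v ∨ _) ↔ (H.G.Adj u v ∨ _)
  constructor
  · rintro (h | ⟨hne, h | h⟩)
    · exact Or.inl h
    · exact Or.inr ⟨hne, Or.inr h⟩
    · exact Or.inr ⟨hne, Or.inl h⟩
  · rintro (h | ⟨hne, h | h⟩)
    · exact Or.inl h
    · exact Or.inr ⟨hne, Or.inr h⟩
    · exact Or.inr ⟨hne, Or.inl h⟩

lemma merge_join_both {S : Finset (Fin k)} {t a b : Fin k} (ha : a ∈ S) (hb : b ∈ S)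
    (H : LGraph k) :
    LIso (mergeInto S t (join a b H)) (mergeInto S t H) := by
  refine liso_mk (Equiv.refl _) ?_ ?_
  · rintro (_ | u) (_ | v)
    · exact Iff.rfl
    · show (∃ w, H.lab w ∈ S ∧ H.G.Adj w v.1) ↔ (∃ w, H.lab w ∈ S ∧ (join a b H).G.Adj w v.1)
      refine exists_congr fun w => and_congr_right fun hw => ?_
      refine Iff.trans ?_ join_adj.symm
      constructor
      · exact Or.inl
      · rintro (h | ⟨hne, ⟨h1, h2⟩ | ⟨h1, h2⟩⟩)
        · exact h
        · exact absurd (h2 ▸ hb) v.2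
        · exact absurd (h2 ▸ ha) v.2
    · show (∃ w, H.lab w ∈ S ∧ H.G.Adj u.1 w) ↔ (∃ w, H.lab w ∈ S ∧ (join a b H).G.Adj u.1 w)
      refine exists_congr fun w => and_congr_right fun hw => ?_
      refine Iff.trans ?_ join_adj.symm
      constructor
      · exact Or.inl
      · rintro (h | ⟨hne, ⟨h1, h2⟩ | ⟨h1, h2⟩⟩)
        · exact h
        · exact absurd (h1 ▸ ha) u.2
        · exact absurd (h1 ▸ hb) u.2
    · show H.G.Adj u.1 v.1 ↔ (join a b H).G.Adj u.1 v.1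
      refine Iff.trans ?_ join_adj.symm
      constructor
      · exact Or.inl
      · rintro (h | ⟨hne, ⟨h1, h2⟩ | ⟨h1, h2⟩⟩)
        · exact h
        · exact absurd (h1 ▸ ha) u.2
        · exact absurd (h1 ▸ hb) u.2
  · rintro (_ | u) <;> rfl

lemma merge_join_left {S : Finset (Fin k)} {t a b : Fin k} (ha : a ∈ S) (hb : b ∉ S)
    (ht : t ∈ S) (H : LGraph k) (hex : ∃ u, H.lab u = a) :
    LIso (mergeInto S t (join a b H)) (join t b (mergeInto S t H)) := by
  obtain ⟨ua, hua⟩ := hex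
  refine liso_mk (Equiv.refl _) ?_ ?_
  · rintro (_ | u) (_ | v)
    -- none none
    · show ((mergeInto S t H).G.Adj none none ∨ ((none : (mergeInto S t H).V) ≠ none ∧ _)) ↔
        (mergeInto S t (join a b H)).G.Adj none none
      simp
    -- none some
    · show ((mergeInto S t H).G.Adj none (some v) ∨ ((none : (mergeInto S t H).V) ≠ some v ∧
          (((mergeInto S t H).lab none = t ∧ (mergeInto S t H).lab (some v) = b) ∨
           ((mergeInto S t H).lab none = b ∧ (mergeInto S t H).lab (some v) = t)))) ↔
        (∃ w, H.lab w ∈ S ∧ (join a b H).G.Adj w v.1)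
      simp only [mergeInto_adj_none_some, mergeInto_lab_none, mergeInto_lab_some]
      constructor
      · rintro (⟨w, hw, haw⟩ | ⟨hne, ⟨_, h2⟩ | ⟨h1, h2⟩⟩)
        · exact ⟨w, hw, Or.inl haw⟩
        · refine ⟨ua, hua ▸ ha, Or.inr ⟨?_, Or.inl ⟨hua, h2⟩⟩⟩
          intro he
          exact v.2 (he ▸ (hua ▸ ha))
        · exact absurd (h1 ▸ ht) hb
      · rintro ⟨w, hw, haw | ⟨hne, ⟨h1, h2⟩ | ⟨h1, h2⟩⟩⟩
        · exact Or.inl ⟨w, hw, haw⟩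
        · exact Or.inr ⟨Ne.symm (Option.some_ne_none _), Or.inl ⟨by trivial, h2⟩⟩
        · exact absurd (h1 ▸ hb) (by simpa using hw)
    -- some none
    · show ((mergeInto S t H).G.Adj (some u) none ∨ ((some u : (mergeInto S t H).V) ≠ none ∧
          (((mergeInto S t H).lab (some u) = t ∧ (mergeInto S t H).lab none = b) ∨
           ((mergeInto S t H).lab (some u) = b ∧ (mergeInto S t H).lab none = t)))) ↔
        (∃ w, H.lab w ∈ S ∧ (join a b H).G.Adj u.1 w)
      simp only [mergeInto_adj_some_none, mergeInto_lab_none, mergeInto_lab_some]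
      constructor
      · rintro (⟨w, hw, haw⟩ | ⟨hne, ⟨h1, h2⟩ | ⟨h1, _⟩⟩)
        · exact ⟨w, hw, Or.inl haw⟩
        · exact absurd (h1 ▸ u.2) (fun hn => hn ht)
        · refine ⟨ua, hua ▸ ha, Or.inr ⟨?_, Or.inr ⟨h1, hua⟩⟩⟩
          intro he
          exact u.2 (he ▸ (hua ▸ ha))
      · rintro ⟨w, hw, haw | ⟨hne, ⟨h1, h2⟩ | ⟨h1, h2⟩⟩⟩
        · exact Or.inl ⟨w, hw, haw⟩
        · exact absurd hw (h2 ▸ hb)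
        · exact Or.inr ⟨by simp, Or.inr ⟨h1, by trivial⟩⟩
    -- some some
    · show ((mergeInto S t H).G.Adj (some u) (some v) ∨ ((some u : (mergeInto S t H).V) ≠ some v ∧
          ((H.lab u.1 = t ∧ H.lab v.1 = b) ∨ (H.lab u.1 = b ∧ H.lab v.1 = t)))) ↔
        (join a b H).G.Adj u.1 v.1
      change H.G.Adj u.1 v.1 ∨ _ ↔ H.G.Adj u.1 v.1 ∨ (u.1 ≠ v.1 ∧ ((H.lab u.1 = a ∧ H.lab v.1 = b) ∨ (H.lab u.1 = b ∧ H.lab v.1 = a)))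
      constructor
      · rintro (h | ⟨hne, ⟨h1, h2⟩ | ⟨h1, h2⟩⟩)
        · exact Or.inl h
        · exact absurd (h1 ▸ ht) u.2
        · exact absurd (h2 ▸ ht) v.2
      · rintro (h | ⟨hne, ⟨h1, h2⟩ | ⟨h1, h2⟩⟩)
        · exact Or.inl h
        · exact absurd (h1 ▸ ha) u.2
        · exact absurd (h2 ▸ ha) v.2
  · rintro (_ | u) <;> rfl

lemma merge_relabel_mem {S : Finset (Fin k)} {t c d : Fin k} (hd : d ∈ S) (H : LGraph k) :
    LIso (mergeInto S t (relabel c d H)) (mergeInto (insert c S) t H) := by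
  have hp : ∀ w : H.V, (relabel c d H).lab w ∈ S ↔ H.lab w ∈ insert c S := by
    intro w
    simp only [relabel_lab, Finset.mem_insert]
    split_ifs with h
    · simp [h, hd]
    · simp [h]
  refine liso_mk (Equiv.optionCongr ((Equiv.refl H.V).subtypeEquiv
      (fun v => not_congr (hp v)))) ?_ ?_
  · rintro (_ | u) (_ | v)
    · exact Iff.rfl
    · show (∃ w, H.lab w ∈ insert c S ∧ H.G.Adj w v.1) ↔
        (∃ w, (relabel c d H).lab w ∈ S ∧ H.G.Adj w v.1)
      exact exists_congr fun w => and_congr_left fun _ => (hp w).symm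
    · show (∃ w, H.lab w ∈ insert c S ∧ H.G.Adj u.1 w) ↔
        (∃ w, (relabel c d H).lab w ∈ S ∧ H.G.Adj u.1 w)
      exact exists_congr fun w => and_congr_left fun _ => (hp w).symm
    · exact Iff.rfl
  · rintro (_ | u)
    · rfl
    · show H.lab u.1 = (relabel c d H).lab u.1
      have := u.2
      change H.lab u.1 = if H.lab u.1 = c then d else H.lab u.1
      rw [if_neg (fun h : H.lab u.1 = c => this (by change (if H.lab u.1 = c then d else H.lab u.1) ∈ S; simp [h, hd]))]

lemma merge_relabel_erase {S : Finset (Fin k)} {t c d : Fin k} (hc : c ∈ S) (hct : c ≠ t)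
    (hd : d ∉ S) (H : LGraph k) :
    LIso (mergeInto S t (relabel c d H)) (relabel c d (mergeInto (S.erase c) t H)) := by
  have hp : ∀ w : H.V, (relabel c d H).lab w ∈ S ↔ H.lab w ∈ S.erase c := by
    intro w
    simp only [relabel_lab, Finset.mem_erase]
    split_ifs with h
    · simp [h, hd]
    · simp [h]
  refine liso_mk (Equiv.optionCongr ((Equiv.refl H.V).subtypeEquiv
      (fun v => not_congr (hp v)))) ?_ ?_
  · rintro (_ | u) (_ | v)
    · exact Iff.rfl
    · show (∃ w, H.lab w ∈ S.erase c ∧ H.G.Adj w v.1) ↔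
        (∃ w, (relabel c d H).lab w ∈ S ∧ H.G.Adj w v.1)
      exact exists_congr fun w => and_congr_left fun _ => (hp w).symm
    · show (∃ w, H.lab w ∈ S.erase c ∧ H.G.Adj u.1 w) ↔
        (∃ w, (relabel c d H).lab w ∈ S ∧ H.G.Adj u.1 w)
      exact exists_congr fun w => and_congr_left fun _ => (hp w).symm
    · exact Iff.rfl
  · rintro (_ | u)
    · show (if t = c then d else t) = t
      rw [if_neg (fun h => hct h.symm)]
    · rfl

lemma merge_relabel_none {S : Finset (Fin k)} {t c d : Fin k} (hc : c ∉ S) (hd : d ∉ S)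
    (htc : t ≠ c) (H : LGraph k) :
    LIso (mergeInto S t (relabel c d H)) (relabel c d (mergeInto S t H)) := by
  have hp : ∀ w : H.V, (relabel c d H).lab w ∈ S ↔ H.lab w ∈ S := by
    intro w
    simp only [relabel_lab]
    split_ifs with h
    · simp [h, hd, hc]
    · simp
  refine liso_mk (Equiv.optionCongr ((Equiv.refl H.V).subtypeEquiv
      (fun v => not_congr (hp v)))) ?_ ?_
  · rintro (_ | u) (_ | v)
    · exact Iff.rfl
    · show (∃ w, H.lab w ∈ S ∧ H.G.Adj w v.1) ↔
        (∃ w, (relabel c d H).lab w ∈ S ∧ H.G.Adj w v.1)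
      exact exists_congr fun w => and_congr_left fun _ => (hp w).symm
    · show (∃ w, H.lab w ∈ S ∧ H.G.Adj u.1 w) ↔
        (∃ w, (relabel c d H).lab w ∈ S ∧ H.G.Adj u.1 w)
      exact exists_congr fun w => and_congr_left fun _ => (hp w).symm
    · exact Iff.rfl
  · rintro (_ | u)
    · show (if t = c then d else t) = t
      rw [if_neg htc]
    · rfl

lemma merge_retarget {S : Finset (Fin k)} {t s : Fin k} (hs : s ∈ S) (hst : s ≠ t)
    (H : LGraph k) (hnot : ∀ v : H.V, H.lab v ≠ t) :
    LIso (mergeInto S t H) (relabel s t (mergeInto (S.erase t) s H)) := by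
  have hp : ∀ w : H.V, H.lab w ∈ S ↔ H.lab w ∈ S.erase t := by
    intro w
    rw [Finset.mem_erase]
    exact ⟨fun h => ⟨hnot w, h⟩, fun h => h.2⟩
  refine liso_mk (Equiv.optionCongr ((Equiv.refl H.V).subtypeEquiv
      (fun v => not_congr (hp v)))) ?_ ?_
  · rintro (_ | u) (_ | v)
    · exact Iff.rfl
    · show (∃ w, H.lab w ∈ S.erase t ∧ H.G.Adj w v.1) ↔ (∃ w, H.lab w ∈ S ∧ H.G.Adj w v.1)
      exact exists_congr fun w => and_congr_left fun _ => ((hp w).symm)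
    · show (∃ w, H.lab w ∈ S.erase t ∧ H.G.Adj u.1 w) ↔ (∃ w, H.lab w ∈ S ∧ H.G.Adj u.1 w)
      exact exists_congr fun w => and_congr_left fun _ => ((hp w).symm)
    · exact Iff.rfl
  · rintro (_ | u)
    · show (if s = s then t else s) = t
      simp
    · show (if H.lab u.1 = s then t else H.lab u.1) = H.lab u.1
      exact if_neg (fun h => u.2 (by rw [h]; exact hs))

end LGraph

namespace FuseExpr

open LGraph

variable {k : ℕ}

/-- `H` has at least one vertex with label in `S`. -/
def OneS (S : Finset (Fin k)) (H : LGraph k) : Prop := ∃ v, H.lab v ∈ S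

/-- `H` has at least two vertices with labels in `S`. -/
def TwoS (S : Finset (Fin k)) (H : LGraph k) : Prop :=
  ∃ u v, u ≠ v ∧ H.lab u ∈ S ∧ H.lab v ∈ S

open scoped Classical

/-- Apply a relabel only if it is useful. -/
noncomputable def relabelIf (c d : Fin k) (χ : FuseExpr k) : FuseExpr k :=
  if c ≠ d ∧ relabelUseful c χ.eval then .relabel c d χ else χ

/-- Apply a join only if it is useful. -/
noncomputable def joinIf (a b : Fin k) (χ : FuseExpr k) : FuseExpr k :=
  if a ≠ b ∧ joinUseful a b χ.eval then .join a b χ else χ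

/-- Apply a fuse only if it is useful. -/
noncomputable def fuseIf (i : Fin k) (χ : FuseExpr k) : FuseExpr k :=
  if fuseUseful i χ.eval then .fuse i χ else χ

/-- Apply the (useful) relabels `ρ_{c→t}` for all `c` in the list. -/
noncomputable def relsList : List (Fin k) → Fin k → FuseExpr k → FuseExpr k
  | [], _, χ => χ
  | c :: l, t, χ => relabelIf c t (relsList l t χ)

/-- Size of an expression. -/
def esize : FuseExpr k → ℕ
  | .intro _ => 1
  | .union φ1 φ2 => esize φ1 + esize φ2 + 1
  | .join _ _ φ => esize φ + 1
  | .relabel _ _ φ => esize φ + 1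
  | .fuse _ φ => esize φ + 1

/-- Realize the operation "fuse all vertices with label in `S` into one vertex of
label `t`" (with `t ∈ S`) on a normalized expression, producing a normalized
expression.  The first argument is fuel. -/
noncomputable def core : ℕ → Fin k → Finset (Fin k) → FuseExpr k → FuseExpr k
  | 0, _, _, ψ => ψ
  | n+1, t, S, ψ =>
    if TwoS S ψ.eval then
      match ψ with
      | .union ψ1 ψ2 =>
          fuseIf t (.union (relsList (S.erase t).toList t ψ1)
            (relsList (S.erase t).toList t ψ2))
      | .fuse j ψ' => if j ∈ S then core n t S ψ' else fuseIf j (core n t S ψ')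
      | .join a b ψ' =>
          if a ∈ S then
            (if b ∈ S then core n t S ψ' else joinIf t b (core n t S ψ'))
          else if b ∈ S then joinIf a t (core n t S ψ')
          else joinIf a b (core n t S ψ')
      | .relabel c d ψ' =>
          if d ∈ S then core n t (insert c S) ψ'
          else if c ∈ S then
            (if c = t then
              (if hs : (S.erase t).Nonempty then
                .relabel hs.choose t (core n hs.choose (S.erase t) (.relabel c d ψ'))
              else ψ)
            else relabelIf c d (core n t (S.erase c) ψ'))
          else relabelIf c d (core n t S ψ')
      | ψ => ψ
    else
      if h1 : ∃ v, ψ.eval.lab v ∈ S then relabelIf (ψ.eval.lab h1.choose) t ψ else ψ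

/-- Normalization of a fuse-expression. -/
noncomputable def normalize : FuseExpr k → FuseExpr k
  | .intro i => .intro i
  | .union φ1 φ2 => .union (normalize φ1) (normalize φ2)
  | .join a b φ => joinIf a b (normalize φ)
  | .relabel a b φ => relabelIf a b (normalize φ)
  | .fuse i φ => core ((k+1) * esize (normalize φ) + k + 1) i {i} (normalize φ)

end FuseExpr

namespace FuseExpr

open LGraph

variable {k : ℕ}

lemma relabelIf_liso (c d : Fin k) (χ : FuseExpr k) :
    LIso (relabelIf c d χ).eval (LGraph.relabel c d χ.eval) := by
  unfold relabelIf
  split_ifs with h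
  · exact liso_refl _
  · by_cases hcd : c = d
    · subst hcd
      exact liso_symm (relabel_self_liso c χ.eval)
    · exact liso_symm (relabel_useless_liso d (fun hu => h ⟨hcd, hu⟩))

lemma relabelIf_noUseless {χ : FuseExpr k} (c d : Fin k) (h : χ.NoUseless) :
    (relabelIf c d χ).NoUseless := by
  unfold relabelIf
  split_ifs with hg
  · exact ⟨hg.1, hg.2, h⟩
  · exact h

lemma relabelIf_fau {χ : FuseExpr k} (c d : Fin k) (h : χ.FusesAboveUnions) :
    (relabelIf c d χ).FusesAboveUnions := by
  unfold relabelIf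
  split_ifs with hg
  · exact h
  · exact h

lemma joinIf_liso {a b : Fin k} (hab : a ≠ b) (χ : FuseExpr k) :
    LIso (joinIf a b χ).eval (LGraph.join a b χ.eval) := by
  unfold joinIf
  split_ifs with h
  · exact liso_refl _
  · exact liso_symm (join_useless_liso (fun hu => h ⟨hab, hu⟩))

lemma joinIf_noUseless {χ : FuseExpr k} (a b : Fin k) (h : χ.NoUseless) :
    (joinIf a b χ).NoUseless := by
  unfold joinIf
  split_ifs with hg
  · exact ⟨hg.1, hg.2, h⟩
  · exact h

lemma joinIf_fau {χ : FuseExpr k} (a b : Fin k) (h : χ.FusesAboveUnions) :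
    (joinIf a b χ).FusesAboveUnions := by
  unfold joinIf
  split_ifs with hg
  · exact h
  · exact h

lemma fuseIf_liso {i : Fin k} {χ : FuseExpr k} (hex : ∃ v, χ.eval.lab v = i) :
    LIso (fuseIf i χ).eval (LGraph.fuse i χ.eval) := by
  unfold fuseIf
  split_ifs with h
  · exact liso_refl _
  · obtain ⟨v, hv⟩ := hex
    refine liso_symm (fuse_single_liso v hv (fun w hw => ?_))
    by_contra hne
    exact h ⟨w, v, hne, hw, hv⟩

lemma fuseIf_noUseless {χ : FuseExpr k} (i : Fin k) (h : χ.NoUseless) :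
    (fuseIf i χ).NoUseless := by
  unfold fuseIf
  split_ifs with hg
  · exact ⟨hg, h⟩
  · exact h

lemma fuseIf_fau {χ : FuseExpr k} (i : Fin k) (hchain : χ.IsFuseChainToUnion)
    (h : χ.FusesAboveUnions) : (fuseIf i χ).FusesAboveUnions := by
  unfold fuseIf
  split_ifs with hg
  · exact ⟨hchain, h⟩
  · exact h

lemma fuseIf_chain {χ : FuseExpr k} {i : Fin k} (hg : fuseUseful i χ.eval)
    (hchain : χ.IsFuseChainToUnion) : (fuseIf i χ).IsFuseChainToUnion := by
  unfold fuseIf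
  rw [if_pos hg]
  exact hchain

lemma relabel_relabelSet {c t : Fin k} (hct : c ≠ t) (T : Finset (Fin k)) (H : LGraph k) :
    LIso (LGraph.relabel c t (relabelSet T t H)) (relabelSet (insert c T) t H) := by
  refine liso_mk (Equiv.refl _) (fun _ _ => Iff.rfl) (fun v => ?_)
  show (if H.lab v ∈ insert c T then t else H.lab v) =
    (if (if H.lab v ∈ T then t else H.lab v) = c then t else (if H.lab v ∈ T then t else H.lab v))
  by_cases h1 : H.lab v ∈ T
  · simp [h1, Finset.mem_insert_of_mem h1, Ne.symm hct]
  · by_cases h2 : H.lab v = c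
    · have h3 : c ∉ T := h2 ▸ h1
      simp [h1, h2, h3]
    · simp [h1, h2, Finset.mem_insert]

lemma relsList_liso (l : List (Fin k)) (t : Fin k) (ψ : FuseExpr k) (hl : ∀ c ∈ l, c ≠ t) :
    LIso (relsList l t ψ).eval (relabelSet l.toFinset t ψ.eval) := by
  induction l with
  | nil =>
      refine liso_mk (Equiv.refl _) (fun _ _ => Iff.rfl) (fun v => ?_)
      show (if ψ.eval.lab v ∈ (∅ : Finset (Fin k)) then t else ψ.eval.lab v) = ψ.eval.lab v
      simp
  | cons c l ih =>
      have h1 : LIso (relabelIf c t (relsList l t ψ)).eval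
          (LGraph.relabel c t (relsList l t ψ).eval) := relabelIf_liso c t _
      have h2 := relabel_congr c t (ih (fun x hx => hl x (List.mem_cons_of_mem c hx)))
      have h3 := relabel_relabelSet (hl c List.mem_cons_self) l.toFinset ψ.eval
      have h4 : LIso (relsList (c :: l) t ψ).eval (relabelSet (insert c l.toFinset) t ψ.eval) :=
        liso_trans h1 (liso_trans h2 h3)
      rw [List.toFinset_cons]
      exact h4

lemma relsList_noUseless (l : List (Fin k)) (t : Fin k) {ψ : FuseExpr k} (h : ψ.NoUseless) :
    (relsList l t ψ).NoUseless := by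
  induction l with
  | nil => exact h
  | cons c l ih => exact relabelIf_noUseless c t ih

lemma relsList_fau (l : List (Fin k)) (t : Fin k) {ψ : FuseExpr k} (h : ψ.FusesAboveUnions) :
    (relsList l t ψ).FusesAboveUnions := by
  induction l with
  | nil => exact h
  | cons c l ih => exact relabelIf_fau c t ih

lemma liso_oneS {H H' : LGraph k} (h : LIso H H') (S : Finset (Fin k)) :
    OneS S H → OneS S H' := by
  obtain ⟨e, he⟩ := h
  rintro ⟨v, hv⟩
  exact ⟨e v, by rw [he]; exact hv⟩

lemma liso_twoS {H H' : LGraph k} (h : LIso H H') (S : Finset (Fin k)) :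
    TwoS S H → TwoS S H' := by
  obtain ⟨e, he⟩ := h
  rintro ⟨u, v, hne, hu, hv⟩
  exact ⟨e u, e v, fun hh => hne (e.toEquiv.injective hh),
    by rw [he]; exact hu, by rw [he]; exact hv⟩

lemma liso_fuseUseful {H H' : LGraph k} (h : LIso H H') {i : Fin k} :
    fuseUseful i H → fuseUseful i H' := by
  obtain ⟨e, he⟩ := h
  rintro ⟨u, v, hne, hu, hv⟩
  exact ⟨e u, e v, fun hh => hne (e.toEquiv.injective hh),
    by rw [he]; exact hu, by rw [he]; exact hv⟩

lemma liso_relabelUseful {H H' : LGraph k} (h : LIso H H') {a : Fin k} :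
    relabelUseful a H → relabelUseful a H' := by
  obtain ⟨e, he⟩ := h
  rintro ⟨v, hv⟩
  exact ⟨e v, by rw [he]; exact hv⟩

lemma fuseUseful_mergeInto {S : Finset (Fin k)} {t j : Fin k} (hj : j ∉ S) (htj : t ≠ j)
    {H : LGraph k} (h : fuseUseful j H) : fuseUseful j (mergeInto S t H) := by
  obtain ⟨u, v, hne, hu, hv⟩ := h
  refine ⟨some ⟨u, fun hh => hj (hu ▸ hh)⟩, some ⟨v, fun hh => hj (hv ▸ hh)⟩, ?_, hu, hv⟩
  intro hh
  apply hne
  exact congrArg Subtype.val (Option.some.inj hh)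

lemma fuseUseful_relabelSet {S : Finset (Fin k)} {t : Fin k} {H : LGraph k}
    (h : TwoS S H) : fuseUseful t (relabelSet S t H) := by
  obtain ⟨u, v, hne, hu, hv⟩ := h
  exact ⟨u, v, hne, by simp [hu], by simp [hv]⟩

lemma relabelUseful_mergeInto (S : Finset (Fin k)) (t : Fin k) (H : LGraph k) :
    relabelUseful t (mergeInto S t H) := ⟨none, rfl⟩

end FuseExpr

namespace LGraph

variable {k : ℕ}

lemma fuse_congr (i : Fin k) {H H' : LGraph k} (h : LIso H H') :
    LIso (fuse i H) (fuse i H') :=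
  liso_trans (fuse_liso_mergeInto i H)
    (liso_trans (mergeInto_congr {i} i h) (liso_symm (fuse_liso_mergeInto i H')))

lemma merge_join_none {S : Finset (Fin k)} {t a b : Fin k} (ha : a ∉ S) (hb : b ∉ S)
    (ht : t ∈ S) (H : LGraph k) :
    LIso (mergeInto S t (join a b H)) (join a b (mergeInto S t H)) := by
  have hta : t ≠ a := fun h => ha (h ▸ ht)
  have htb : t ≠ b := fun h => hb (h ▸ ht)
  refine liso_mk (Equiv.refl _) ?_ ?_
  · rintro (_ | u) (_ | v)
    -- none none
    · show ((mergeInto S t H).G.Adj none none ∨ ((none : (mergeInto S t H).V) ≠ none ∧ _)) ↔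
        (mergeInto S t (join a b H)).G.Adj none none
      simp
    -- none some
    · show ((mergeInto S t H).G.Adj none (some v) ∨ ((none : (mergeInto S t H).V) ≠ some v ∧
          ((t = a ∧ H.lab v.1 = b) ∨ (t = b ∧ H.lab v.1 = a)))) ↔
        (∃ w, H.lab w ∈ S ∧ (join a b H).G.Adj w v.1)
      change (∃ w, H.lab w ∈ S ∧ H.G.Adj w v.1) ∨ _ ↔ _
      constructor
      · rintro (⟨w, hw, haw⟩ | ⟨hne, ⟨h1, h2⟩ | ⟨h1, h2⟩⟩)
        · exact ⟨w, hw, Or.inl haw⟩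
        · exact absurd h1 hta
        · exact absurd h1 htb
      · rintro ⟨w, hw, haw | ⟨hne, ⟨h1, h2⟩ | ⟨h1, h2⟩⟩⟩
        · exact Or.inl ⟨w, hw, haw⟩
        · exact absurd (h1 ▸ hw) ha
        · exact absurd (h1 ▸ hw) hb
    -- some none
    · show ((mergeInto S t H).G.Adj (some u) none ∨ ((some u : (mergeInto S t H).V) ≠ none ∧
          ((H.lab u.1 = a ∧ t = b) ∨ (H.lab u.1 = b ∧ t = a)))) ↔
        (∃ w, H.lab w ∈ S ∧ (join a b H).G.Adj u.1 w)
      change (∃ w, H.lab w ∈ S ∧ H.G.Adj u.1 w) ∨ _ ↔ _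
      constructor
      · rintro (⟨w, hw, haw⟩ | ⟨hne, ⟨h1, h2⟩ | ⟨h1, h2⟩⟩)
        · exact ⟨w, hw, Or.inl haw⟩
        · exact absurd h2 htb
        · exact absurd h2 hta
      · rintro ⟨w, hw, haw | ⟨hne, ⟨h1, h2⟩ | ⟨h1, h2⟩⟩⟩
        · exact Or.inl ⟨w, hw, haw⟩
        · exact absurd (h2 ▸ hw) hb
        · exact absurd (h2 ▸ hw) ha
    -- some some
    · show ((mergeInto S t H).G.Adj (some u) (some v) ∨ ((some u : (mergeInto S t H).V) ≠ some v ∧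
          ((H.lab u.1 = a ∧ H.lab v.1 = b) ∨ (H.lab u.1 = b ∧ H.lab v.1 = a)))) ↔
        (join a b H).G.Adj u.1 v.1
      change H.G.Adj u.1 v.1 ∨ _ ↔ H.G.Adj u.1 v.1 ∨ (u.1 ≠ v.1 ∧ ((H.lab u.1 = a ∧ H.lab v.1 = b) ∨ (H.lab u.1 = b ∧ H.lab v.1 = a)))
      constructor
      · rintro (h | ⟨hne, hp⟩)
        · exact Or.inl h
        · refine Or.inr ⟨fun h => hne (congrArg some (Subtype.ext h)), hp⟩
      · rintro (h | ⟨hne, hp⟩)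
        · exact Or.inl h
        · refine Or.inr ⟨fun h => hne (congrArg Subtype.val (Option.some.inj h)), hp⟩
  · rintro (_ | u) <;> rfl

end LGraph

namespace FuseExpr

open LGraph

variable {k : ℕ}

open scoped Classical

lemma core_small (n : ℕ) (t : Fin k) (S : Finset (Fin k)) (ψ : FuseExpr k)
    (h2 : ¬ TwoS S ψ.eval) (hone : ∃ v, ψ.eval.lab v ∈ S) :
    core (n+1) t S ψ = relabelIf (ψ.eval.lab hone.choose) t ψ := by
  cases ψ <;> (simp only [core]; rw [if_neg h2, dif_pos hone])

theorem core_spec : ∀ (n : ℕ) (t : Fin k) (S : Finset (Fin k)) (ψ : FuseExpr k),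
    (k+1) * esize ψ + S.card < n → t ∈ S → ψ.NoUseless → ψ.FusesAboveUnions →
    OneS S ψ.eval →
    LIso (core n t S ψ).eval (mergeInto S t ψ.eval) ∧ (core n t S ψ).NoUseless ∧
      (core n t S ψ).FusesAboveUnions ∧
      (ψ.IsFuseChainToUnion → TwoS S ψ.eval → (core n t S ψ).IsFuseChainToUnion) := by
  intro n
  induction n with
  | zero => intro t S ψ hfuel _ _ _ _; omega
  | succ n ih =>
    intro t S ψ hfuel ht hnu hfau hone
    by_cases h2 : TwoS S ψ.eval
    · -- at least two vertices with labels in S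
      cases ψ with
      | intro i =>
          obtain ⟨u, v, hne, _, _⟩ := h2
          exact absurd (Subsingleton.elim (α := PUnit) u v) hne
      | union ψ1 ψ2 =>
          simp only [core]
          rw [if_pos h2]
          set L := (S.erase t).toList with hL
          have hLt : ∀ c ∈ L, c ≠ t := fun c hc =>
            (Finset.mem_erase.mp (Finset.mem_toList.mp hc)).1
          have hLS : L.toFinset = S.erase t := Finset.toList_toFinset _
          have hr1 : LIso (relsList L t ψ1).eval (relabelSet S t ψ1.eval) := by
            refine liso_trans (relsList_liso L t ψ1 hLt) ?_
            rw [hLS]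
            exact relabelSet_erase_liso S t ψ1.eval
          have hr2 : LIso (relsList L t ψ2).eval (relabelSet S t ψ2.eval) := by
            refine liso_trans (relsList_liso L t ψ2 hLt) ?_
            rw [hLS]
            exact relabelSet_erase_liso S t ψ2.eval
          have hU : LIso (FuseExpr.union (relsList L t ψ1) (relsList L t ψ2)).eval
              (relabelSet S t (FuseExpr.union ψ1 ψ2).eval) := by
            refine liso_trans (union_congr hr1 hr2) ?_
            exact liso_symm (relabelSet_union_liso S t ψ1.eval ψ2.eval)
          have hgu : fuseUseful t (FuseExpr.union (relsList L t ψ1) (relsList L t ψ2)).eval :=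
            liso_fuseUseful (liso_symm hU) (fuseUseful_relabelSet h2)
          have hexv : ∃ v, (FuseExpr.union (relsList L t ψ1) (relsList L t ψ2)).eval.lab v = t :=
            ⟨hgu.choose, hgu.choose_spec.choose_spec.2.1⟩
          refine ⟨?_, ?_, ?_, ?_⟩
          · refine liso_trans (fuseIf_liso hexv) ?_
            refine liso_trans (fuse_congr t hU) ?_
            exact liso_symm (merge_relabelSet ht _)
          · exact fuseIf_noUseless t ⟨relsList_noUseless L t hnu.1, relsList_noUseless L t hnu.2⟩
          · exact fuseIf_fau t trivial ⟨relsList_fau L t hfau.1, relsList_fau L t hfau.2⟩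
          · intro _ _
            exact fuseIf_chain hgu trivial
      | join a b ψ' =>
          simp only [core]
          rw [if_pos h2]
          obtain ⟨hab, huse, hnu'⟩ := hnu
          have hfuel' : (k+1) * esize ψ' + S.card < n := by
            have : esize (FuseExpr.join a b ψ') = esize ψ' + 1 := rfl
            rw [this, Nat.mul_add, Nat.mul_one] at hfuel
            omega
          have hone' : OneS S ψ'.eval := hone
          obtain ⟨hiso, hno, hfa, _⟩ := ih t S ψ' hfuel' ht hnu' hfau hone'
          by_cases haS : a ∈ S
          · by_cases hbS : b ∈ S
            · rw [if_pos haS, if_pos hbS]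
              refine ⟨liso_trans hiso (liso_symm (merge_join_both haS hbS ψ'.eval)),
                hno, hfa, fun hc _ => hc.elim⟩
            · rw [if_pos haS, if_neg hbS]
              have htb : t ≠ b := fun h => hbS (h ▸ ht)
              have hexa : ∃ u, ψ'.eval.lab u = a := by
                obtain ⟨u, v, _, hu, _, _⟩ := huse
                exact ⟨u, hu⟩
              refine ⟨?_, joinIf_noUseless t b hno, joinIf_fau t b hfa, fun hc _ => hc.elim⟩
              refine liso_trans (joinIf_liso htb _) ?_
              refine liso_trans (join_congr t b hiso) ?_
              exact liso_symm (merge_join_left haS hbS ht ψ'.eval hexa)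
          · by_cases hbS : b ∈ S
            · rw [if_neg haS, if_pos hbS]
              have hta : t ≠ a := fun h => haS (h ▸ ht)
              have hat : a ≠ t := fun h => haS (h ▸ ht)
              have hexb : ∃ u, ψ'.eval.lab u = b := by
                obtain ⟨u, v, _, _, hv, _⟩ := huse
                exact ⟨v, hv⟩
              refine ⟨?_, joinIf_noUseless a t hno, joinIf_fau a t hfa, fun hc _ => hc.elim⟩
              refine liso_trans (joinIf_liso hat _) ?_
              refine liso_trans (join_congr a t hiso) ?_
              refine liso_trans (join_comm_liso a t _) ?_
              refine liso_trans (liso_symm (merge_join_left hbS haS ht ψ'.eval hexb)) ?_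
              exact liso_symm (mergeInto_congr S t (join_comm_liso a b ψ'.eval))
            · rw [if_neg haS, if_neg hbS]
              refine ⟨?_, joinIf_noUseless a b hno, joinIf_fau a b hfa, fun hc _ => hc.elim⟩
              refine liso_trans (joinIf_liso hab _) ?_
              refine liso_trans (join_congr a b hiso) ?_
              exact liso_symm (merge_join_none haS hbS ht ψ'.eval)
      | relabel c d ψ' =>
          simp only [core]
          rw [if_pos h2]
          obtain ⟨hcd, huse, hnu'⟩ := hnu
          have hesize : esize (FuseExpr.relabel c d ψ') = esize ψ' + 1 := rfl
          by_cases hdS : d ∈ S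
          · rw [if_pos hdS]
            have hcard : (insert c S).card ≤ k := by
              have := Finset.card_le_univ (insert c S)
              simpa using this
            have hfuel' : (k+1) * esize ψ' + (insert c S).card < n := by
              rw [hesize, Nat.mul_add, Nat.mul_one] at hfuel
              omega
            have hone' : OneS (insert c S) ψ'.eval := by
              obtain ⟨v, hv⟩ := hone
              show ∃ v, ψ'.eval.lab v ∈ insert c S
              by_cases h : ψ'.eval.lab v = c
              · exact ⟨v, by rw [h]; exact Finset.mem_insert_self c S⟩
              · refine ⟨v, Finset.mem_insert_of_mem ?_⟩
                have hv' : (if ψ'.eval.lab v = c then d else ψ'.eval.lab v) ∈ S := hv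
                rwa [if_neg h] at hv'
            obtain ⟨hiso, hno, hfa, _⟩ :=
              ih t (insert c S) ψ' hfuel' (Finset.mem_insert_of_mem ht) hnu' hfau hone'
            exact ⟨liso_trans hiso (liso_symm (merge_relabel_mem hdS ψ'.eval)),
              hno, hfa, fun hc _ => hc.elim⟩
          · rw [if_neg hdS]
            by_cases hcS : c ∈ S
            · rw [if_pos hcS]
              have hdt : d ≠ t := by
                intro h
                exact hdS (h ▸ ht)
              by_cases hct : c = t
              · rw [if_pos hct]
                subst hct
                -- here the label c (= t) is relabelled away; merge into a temporary label
                have hnott : ∀ v : (FuseExpr.relabel c d ψ').eval.V,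
                    (FuseExpr.relabel c d ψ').eval.lab v ≠ c := by
                  intro v
                  show (if ψ'.eval.lab v = c then d else ψ'.eval.lab v) ≠ c
                  split_ifs with h
                  · exact fun hh => hcd hh.symm
                  · exact h
                have hone'' : OneS (S.erase c) (FuseExpr.relabel c d ψ').eval := by
                  obtain ⟨v, hv⟩ := hone
                  exact ⟨v, Finset.mem_erase.mpr ⟨hnott v, hv⟩⟩
                have hs : (S.erase c).Nonempty := by
                  obtain ⟨v, hv⟩ := hone''
                  exact ⟨_, hv⟩
                rw [dif_pos hs]
                set s := hs.choose with hsdef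
                have hsmem : s ∈ S.erase c := hs.choose_spec
                have hsS : s ∈ S := (Finset.mem_erase.mp hsmem).2
                have hsc : s ≠ c := (Finset.mem_erase.mp hsmem).1
                have hfuel'' : (k+1) * esize (FuseExpr.relabel c d ψ') + (S.erase c).card < n := by
                  have hc1 : (S.erase c).card = S.card - 1 := Finset.card_erase_of_mem hcS
                  have hc2 : 1 ≤ S.card := Finset.card_pos.mpr ⟨c, hcS⟩
                  omega
                obtain ⟨hiso, hno, hfa, _⟩ :=
                  ih s (S.erase c) (FuseExpr.relabel c d ψ') hfuel'' hsmem
                    ⟨hcd, huse, hnu'⟩ hfau hone''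
                refine ⟨?_, ⟨hsc, ?_, hno⟩, hfa, fun hc _ => hc.elim⟩
                · refine liso_trans (relabel_congr s c hiso) ?_
                  exact liso_symm (merge_retarget hsS hsc _ hnott)
                · exact liso_relabelUseful (liso_symm hiso)
                    (relabelUseful_mergeInto (S.erase c) s _)
              · rw [if_neg hct]
                have hfuel' : (k+1) * esize ψ' + (S.erase c).card < n := by
                  rw [hesize, Nat.mul_add, Nat.mul_one] at hfuel
                  have : (S.erase c).card ≤ S.card := Finset.card_erase_le
                  omega
                have ht' : t ∈ S.erase c := Finset.mem_erase.mpr ⟨fun h => hct h.symm, ht⟩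
                have hone' : OneS (S.erase c) ψ'.eval := by
                  obtain ⟨v, hv⟩ := hone
                  have hv' : (if ψ'.eval.lab v = c then d else ψ'.eval.lab v) ∈ S := hv
                  by_cases h : ψ'.eval.lab v = c
                  · rw [if_pos h] at hv'
                    exact absurd hv' hdS
                  · rw [if_neg h] at hv'
                    exact ⟨v, Finset.mem_erase.mpr ⟨h, hv'⟩⟩
                obtain ⟨hiso, hno, hfa, _⟩ := ih t (S.erase c) ψ' hfuel' ht' hnu' hfau hone'
                refine ⟨?_, relabelIf_noUseless c d hno, relabelIf_fau c d hfa,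
                  fun hc _ => hc.elim⟩
                refine liso_trans (relabelIf_liso c d _) ?_
                refine liso_trans (relabel_congr c d hiso) ?_
                exact liso_symm (merge_relabel_erase hcS hct hdS ψ'.eval)
            · rw [if_neg hcS]
              have htc : t ≠ c := fun h => hcS (h ▸ ht)
              have hfuel' : (k+1) * esize ψ' + S.card < n := by
                rw [hesize, Nat.mul_add, Nat.mul_one] at hfuel
                omega
              have hone' : OneS S ψ'.eval := by
                obtain ⟨v, hv⟩ := hone
                have hv' : (if ψ'.eval.lab v = c then d else ψ'.eval.lab v) ∈ S := hv
                by_cases h : ψ'.eval.lab v = c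
                · rw [if_pos h] at hv'
                  exact absurd hv' hdS
                · rw [if_neg h] at hv'
                  exact ⟨v, hv'⟩
              obtain ⟨hiso, hno, hfa, _⟩ := ih t S ψ' hfuel' ht hnu' hfau hone'
              refine ⟨?_, relabelIf_noUseless c d hno, relabelIf_fau c d hfa,
                fun hc _ => hc.elim⟩
              refine liso_trans (relabelIf_liso c d _) ?_
              refine liso_trans (relabel_congr c d hiso) ?_
              exact liso_symm (merge_relabel_none hcS hdS htc ψ'.eval)
      | fuse j ψ' =>
          simp only [core]
          rw [if_pos h2]
          obtain ⟨huse, hnu'⟩ := hnu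
          obtain ⟨hchain', hfau'⟩ := hfau
          have hfuel' : (k+1) * esize ψ' + S.card < n := by
            have : esize (FuseExpr.fuse j ψ') = esize ψ' + 1 := rfl
            rw [this, Nat.mul_add, Nat.mul_one] at hfuel
            omega
          by_cases hjS : j ∈ S
          · rw [if_pos hjS]
            have hone' : OneS S ψ'.eval := by
              obtain ⟨u, _, _, hu, _⟩ := huse
              exact ⟨u, by rw [hu]; exact hjS⟩
            have htwo' : TwoS S ψ'.eval := by
              obtain ⟨u, v, hne, hu, hv⟩ := huse
              exact ⟨u, v, hne, by rw [hu]; exact hjS, by rw [hv]; exact hjS⟩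
            obtain ⟨hiso, hno, hfa, hch⟩ := ih t S ψ' hfuel' ht hnu' hfau' hone'
            exact ⟨liso_trans hiso (liso_symm (merge_fuse_mem hjS ψ'.eval)),
              hno, hfa, fun _ _ => hch hchain' htwo'⟩
          · rw [if_neg hjS]
            have htj : t ≠ j := fun h => hjS (h ▸ ht)
            have hone' : OneS S ψ'.eval := by
              obtain ⟨x, hx⟩ := hone
              match x with
              | none => exact absurd hx hjS
              | some u => exact ⟨u.1, hx⟩
            have htwo' : TwoS S ψ'.eval := by
              obtain ⟨x, y, hne, hx, hy⟩ := h2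
              match x, y with
              | none, _ => exact absurd hx hjS
              | _, none => exact absurd hy hjS
              | some u, some v =>
                  exact ⟨u.1, v.1, fun h => hne (congrArg some (Subtype.ext h)), hx, hy⟩
            obtain ⟨hiso, hno, hfa, hch⟩ := ih t S ψ' hfuel' ht hnu' hfau' hone'
            have hchainχ : (core n t S ψ').IsFuseChainToUnion := hch hchain' htwo'
            have hgu : fuseUseful j (core n t S ψ').eval :=
              liso_fuseUseful (liso_symm hiso) (fuseUseful_mergeInto hjS htj huse)
            have hexv : ∃ v, (core n t S ψ').eval.lab v = j :=
              ⟨hgu.choose, hgu.choose_spec.choose_spec.2.1⟩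
            refine ⟨?_, fuseIf_noUseless j hno, fuseIf_fau j hchainχ hfa,
              fun _ _ => fuseIf_chain hgu hchainχ⟩
            refine liso_trans (fuseIf_liso hexv) ?_
            refine liso_trans (fuse_congr j hiso) ?_
            exact liso_symm (merge_fuse_notmem hjS htj ψ'.eval)
    · -- at most one vertex with label in S
      have hone' : ∃ v, ψ.eval.lab v ∈ S := hone
      have hcore := core_small n t S ψ h2 hone'
      rw [hcore]
      set v0 := hone'.choose with hv0
      have hv0S : ψ.eval.lab v0 ∈ S := hone'.choose_spec
      have huniq : ∀ w, ψ.eval.lab w ∈ S → w = v0 := by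
        intro w hw
        by_contra hne
        exact h2 ⟨w, v0, hne, hw, hv0S⟩
      refine ⟨?_, relabelIf_noUseless _ t hnu, relabelIf_fau _ t hfau, fun _ htw => absurd htw h2⟩
      refine liso_trans (relabelIf_liso _ t ψ) ?_
      exact liso_symm (merge_single ht v0 hv0S huniq)

end FuseExpr

namespace FuseExpr

open LGraph

variable {k : ℕ}

theorem normalize_spec (φ : FuseExpr k) (hwf : φ.WF) :
    LIso (normalize φ).eval φ.eval ∧ (normalize φ).NoUseless ∧
      (normalize φ).FusesAboveUnions := by
  induction φ with
  | intro i => exact ⟨liso_refl _, trivial, trivial⟩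
  | union φ1 φ2 ih1 ih2 =>
      obtain ⟨h1, h2, h3⟩ := ih1 hwf.1
      obtain ⟨g1, g2, g3⟩ := ih2 hwf.2
      exact ⟨union_congr h1 g1, ⟨h2, g2⟩, ⟨h3, g3⟩⟩
  | join a b φ ihφ =>
      obtain ⟨hab, hwf'⟩ := hwf
      obtain ⟨h1, h2, h3⟩ := ihφ hwf'
      refine ⟨?_, joinIf_noUseless a b h2, joinIf_fau a b h3⟩
      exact liso_trans (joinIf_liso hab _) (join_congr a b h1)
  | relabel a b φ ihφ =>
      obtain ⟨hab, hwf'⟩ := hwf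
      obtain ⟨h1, h2, h3⟩ := ihφ hwf'
      refine ⟨?_, relabelIf_noUseless a b h2, relabelIf_fau a b h3⟩
      exact liso_trans (relabelIf_liso a b _) (relabel_congr a b h1)
  | fuse i φ ihφ =>
      obtain ⟨hwf', hex⟩ := hwf
      obtain ⟨h1, h2, h3⟩ := ihφ hwf'
      have hkpos : 0 < k := Nat.pos_of_ne_zero (fun h => (h ▸ i).elim0)
      have hfuel : (k+1) * esize (normalize φ) + ({i} : Finset (Fin k)).card <
          (k+1) * esize (normalize φ) + k + 1 := by
        rw [Finset.card_singleton]
        omega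
      have honeφ : OneS {i} φ.eval := by
        obtain ⟨v, hv⟩ := hex
        exact ⟨v, by simp [hv]⟩
      have hone : OneS {i} (normalize φ).eval := liso_oneS (liso_symm h1) {i} honeφ
      obtain ⟨c1, c2, c3, _⟩ := core_spec ((k+1) * esize (normalize φ) + k + 1) i {i}
        (normalize φ) hfuel (Finset.mem_singleton_self i) h2 h3 hone
      refine ⟨?_, c2, c3⟩
      refine liso_trans c1 ?_
      refine liso_trans (mergeInto_congr {i} i h1) ?_
      exact liso_symm (fuse_liso_mergeInto i φ.eval)

end FuseExpr



/-- Every fuse-`k`-expression can be transformed into an equivalent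
one without useless operator occurrences in which every fuse node is followed below
only by fuse nodes until a union node is reached. -/
theorem exists_fuses_above_unions {k : ℕ} (φ : FuseExpr k) (hwf : φ.WF) :
    ∃ φ' : FuseExpr k, LGraph.LIso φ'.eval φ.eval ∧ φ'.NoUseless ∧
      φ'.FusesAboveUnions := by
  obtain ⟨h1, h2, h3⟩ := FuseExpr.normalize_spec φ hwf
  exact ⟨FuseExpr.normalize φ, h1, h2, h3⟩
end
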